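/- In the setting of the Rayleigh identity, if additionally $L(U)$ and $L(V)$ are positive semidefinite and $X(W)$ is positive definite, then $(D_U f(W))(D_V f(W)) \ge f(W)\, D_U D_V f(W)$. -/

import Mathlib

open Matrix

attribute [local instance] Matrix.linftyOpNormedRing Matrix.linftyOpNormedAlgebra

private lemma my_hasDerivAt_det {n : ℕ} (M N : Matrix (Fin n) (Fin n) ℝ) (h : IsUnit M.det) :
    HasDerivAt (fun t : ℝ => (M + t • N).det) (M.det * (M⁻¹ * N).trace) 0 := by
  set C0 := M⁻¹ * N with hC0
  set q : Polynomial ℝ :=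
    ((1 + (Polynomial.X : Polynomial ℝ) • C0.map Polynomial.C).det).divX.divX with hq
  have key : (fun t : ℝ => (M + t • N).det)
      = fun t : ℝ => M.det * (1 + C0.trace * t + q.eval t * t ^ 2) := by
    funext t
    have hM : M + t • N = M * (1 + t • C0) := by
      rw [mul_add, mul_one, Matrix.mul_smul, hC0, Matrix.mul_nonsing_inv_cancel_left _ _ h]
    rw [hM, det_mul, Matrix.det_one_add_smul]
  rw [key]
  have h1 : HasDerivAt (fun t : ℝ => 1 + C0.trace * t + q.eval t * t ^ 2) C0.trace 0 := by
    have ha : HasDerivAt (fun t : ℝ => C0.trace * t) C0.trace 0 := by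
      simpa using (hasDerivAt_id (0:ℝ)).const_mul C0.trace
    have hb : HasDerivAt (fun t : ℝ => q.eval t * t ^ 2) 0 0 := by
      exact ((q.hasDerivAt 0).mul (hasDerivAt_pow 2 (0:ℝ))).congr_deriv (by simp)
    exact (((hasDerivAt_const (0:ℝ) (1:ℝ)).add ha).add hb).congr_deriv (by simp)
  simpa using h1.const_mul M.det

private lemma my_trace_nonneg {n : ℕ} {M : Matrix (Fin n) (Fin n) ℝ} (hM : M.PosSemidef) :
    0 ≤ M.trace := by
  refine Finset.sum_nonneg fun i _ => ?_
  have := hM.dotProduct_mulVec_nonneg (Pi.single i 1)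
  simpa [dotProduct, Matrix.mulVec, Pi.single_apply, Finset.sum_ite_eq',
    Finset.sum_ite_eq] using this

private lemma my_trace_mul_nonneg {n : ℕ} {M N : Matrix (Fin n) (Fin n) ℝ}
    (hM : M.PosSemidef) (hN : N.PosSemidef) : 0 ≤ (M * N).trace := by
  obtain ⟨B, rfl⟩ : ∃ B : Matrix (Fin n) (Fin n) ℝ, N = Bᴴ * B := by
    open scoped MatrixOrder in
    obtain ⟨X, hX, -, hXN⟩ := CFC.exists_sqrt_of_isSelfAdjoint_of_quasispectrumRestricts
      hN.isHermitian (QuasispectrumRestricts.nnreal_of_nonneg hN.nonneg)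
    exact ⟨X, by rw [← hXN, ← Matrix.star_eq_conjTranspose, hX.star_eq]⟩
  have h1 : (M * (Bᴴ * B)).trace = (B * M * Bᴴ).trace := by
    rw [← mul_assoc, Matrix.trace_mul_cycle]
  rw [h1]
  exact my_trace_nonneg (hM.mul_mul_conjTranspose_same B)

private lemma my_hasDerivAt_inv_units {n : ℕ} (B : Matrix (Fin n) (Fin n) ℝ)
    (u : (Matrix (Fin n) (Fin n) ℝ)ˣ) :
    HasDerivAt (fun s : ℝ => ((u : Matrix (Fin n) (Fin n) ℝ) + s • B)⁻¹)
      (-((u : Matrix (Fin n) (Fin n) ℝ)⁻¹ * B * (u : Matrix (Fin n) (Fin n) ℝ)⁻¹)) 0 := by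
  have hφ : HasDerivAt (fun s : ℝ => (u : Matrix (Fin n) (Fin n) ℝ) + s • B) B 0 := by
    exact (((hasDerivAt_id (0:ℝ)).smul_const B).const_add (u : Matrix (Fin n) (Fin n) ℝ)).congr_deriv (by simp)
  have hinv : HasFDerivAt (Ring.inverse : Matrix (Fin n) (Fin n) ℝ → Matrix (Fin n) (Fin n) ℝ)
      (-ContinuousLinearMap.mulLeftRight ℝ (Matrix (Fin n) (Fin n) ℝ) ↑u⁻¹ ↑u⁻¹)
      ((u : Matrix (Fin n) (Fin n) ℝ) + (0:ℝ) • B) := by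
    simpa using hasFDerivAt_ringInverse (𝕜 := ℝ) u
  have hc := hinv.comp_hasDerivAt 0 hφ
  have heq : (fun s : ℝ => Ring.inverse ((u : Matrix (Fin n) (Fin n) ℝ) + s • B))
      = fun s : ℝ => ((u : Matrix (Fin n) (Fin n) ℝ) + s • B)⁻¹ := by
    funext s; rw [Matrix.nonsing_inv_eq_ringInverse]
  rw [Function.comp_def, heq] at hc
  exact hc.congr_deriv (by simp [Matrix.coe_units_inv])

private lemma my_hasDerivAt_inv {n : ℕ} (X B : Matrix (Fin n) (Fin n) ℝ) (h : IsUnit X) :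
    HasDerivAt (fun s : ℝ => (X + s • B)⁻¹) (-(X⁻¹ * B * X⁻¹)) 0 := by
  obtain ⟨u, rfl⟩ := h
  exact my_hasDerivAt_inv_units B u

/-- Rayleigh-type inequality: for `f(W) = det(L(W) + R)` with `L` linear,
if `L(U), L(V)` are positive semidefinite and `X(W) = L(W) + R` is positive definite,
then `(D_U f)(D_V f) ≥ f · D_U D_V f`. -/
theorem rayleigh_inequality_det {P : Type*} [AddCommGroup P] [Module ℝ P] {n : ℕ}
    (L : P →ₗ[ℝ] Matrix (Fin n) (Fin n) ℝ) (R : Matrix (Fin n) (Fin n) ℝ)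
    (W U V : P) (hX : (L W + R).PosDef)
    (hU : (L U).PosSemidef) (hV : (L V).PosSemidef) :
    (L W + R).det *
      (deriv (fun s : ℝ =>
        deriv (fun t : ℝ => (L (W + t • U + s • V) + R).det) 0) 0)
    ≤ (deriv (fun t : ℝ => (L (W + t • U) + R).det) 0) *
        (deriv (fun s : ℝ => (L (W + s • V) + R).det) 0) := by
  set X := L W + R with hXdef
  set A := L U with hA
  set B := L V with hB
  have hdetX : IsUnit X.det := hX.det_pos.ne'.isUnit
  -- first derivative in U direction
  have e1 : (fun t : ℝ => (L (W + t • U) + R).det) = fun t : ℝ => (X + t • A).det := by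
    funext t; congr 1
    simp only [map_add, LinearMap.map_smul, hXdef, hA]
    abel
  have d1 : deriv (fun t : ℝ => (L (W + t • U) + R).det) 0 = X.det * (X⁻¹ * A).trace := by
    rw [e1]; exact (my_hasDerivAt_det X A hdetX).deriv
  -- first derivative in V direction
  have e1' : (fun s : ℝ => (L (W + s • V) + R).det) = fun s : ℝ => (X + s • B).det := by
    funext s; congr 1
    simp only [map_add, LinearMap.map_smul, hXdef, hB]
    abel
  have d1' : deriv (fun s : ℝ => (L (W + s • V) + R).det) 0 = X.det * (X⁻¹ * B).trace := by
    rw [e1']; exact (my_hasDerivAt_det X B hdetX).deriv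
  -- rearranged inner path
  have e2 : ∀ s t : ℝ, L (W + t • U + s • V) + R = (X + s • B) + t • A := by
    intro s t
    simp only [map_add, LinearMap.map_smul, hXdef, hA, hB]
    abel
  -- eventual identification of the inner derivative
  have hcont : Continuous fun s : ℝ => (X + s • B).det := by
    exact Continuous.matrix_det (by continuity)
  have hev : ∀ᶠ s : ℝ in nhds 0, IsUnit (X + s • B).det := by
    have h0 : (fun s : ℝ => (X + s • B).det) 0 ≠ 0 := by simpa using hX.det_pos.ne'
    exact (hcont.continuousAt.eventually_ne h0).mono fun s hs => isUnit_iff_ne_zero.mpr hs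
  have heq : (fun s : ℝ => deriv (fun t : ℝ => (L (W + t • U + s • V) + R).det) 0)
      =ᶠ[nhds 0] fun s : ℝ => (X + s • B).det * ((X + s • B)⁻¹ * A).trace := by
    filter_upwards [hev] with s hs
    have hkey := (my_hasDerivAt_det (X + s • B) A hs).deriv
    rw [← hkey]
    congr 1
    funext t
    rw [e2 s t]
  -- derivative of the product representation
  have hd : HasDerivAt (fun s : ℝ => (X + s • B).det) (X.det * (X⁻¹ * B).trace) 0 :=
    my_hasDerivAt_det X B hdetX
  have hXu : IsUnit X := (Matrix.isUnit_iff_isUnit_det X).mpr hdetX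
  have hinv : HasDerivAt (fun s : ℝ => (X + s • B)⁻¹) (-(X⁻¹ * B * X⁻¹)) 0 :=
    my_hasDerivAt_inv X B hXu
  have hmul : HasDerivAt (fun s : ℝ => (X + s • B)⁻¹ * A) (-(X⁻¹ * B * X⁻¹) * A) 0 :=
    hinv.mul_const A
  have htr : HasDerivAt (fun s : ℝ => ((X + s • B)⁻¹ * A).trace)
      ((-(X⁻¹ * B * X⁻¹) * A).trace) 0 := by
    have hc := (LinearMap.toContinuousLinearMap
      (Matrix.traceLinearMap (Fin n) ℝ ℝ)).hasFDerivAt.comp_hasDerivAt 0 hmul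
    exact hc
  have hprod : HasDerivAt (fun s : ℝ => (X + s • B).det * ((X + s • B)⁻¹ * A).trace)
      (X.det * (X⁻¹ * B).trace * (X⁻¹ * A).trace + X.det * (-(X⁻¹ * B * X⁻¹) * A).trace) 0 := by
    have := hd.mul htr
    exact this.congr_deriv (by simp)
  have d2 : deriv (fun s : ℝ =>
      deriv (fun t : ℝ => (L (W + t • U + s • V) + R).det) 0) 0
      = X.det * (X⁻¹ * B).trace * (X⁻¹ * A).trace + X.det * (-(X⁻¹ * B * X⁻¹) * A).trace := by
    rw [heq.deriv_eq]
    exact hprod.deriv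
  rw [d1, d1', d2]
  -- the trace term is nonnegative
  have hpsd : (X⁻¹ * B * X⁻¹).PosSemidef := by
    have := hV.mul_mul_conjTranspose_same X⁻¹
    rwa [hX.inv.isHermitian] at this
  have hTnn : 0 ≤ (X⁻¹ * B * X⁻¹ * A).trace := my_trace_mul_nonneg hpsd hU
  have hTeq : (-(X⁻¹ * B * X⁻¹) * A).trace = -(X⁻¹ * B * X⁻¹ * A).trace := by
    rw [neg_mul, Matrix.trace_neg]
  rw [hTeq]
  have hdpos : (0:ℝ) < X.det := hX.det_pos
  nlinarith [mul_nonneg (mul_nonneg hdpos.le hdpos.le) hTnn]
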